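/- arXiv:2006.03587 — 3 statements merged into one kernel-verified Lean document; each statement's English description precedes it below -/
import Mathlib

section
/- Let f : [0,ζ] → [0,∞) be continuous with f(0) = f(ζ) = 0 and f > 0 on (0,ζ), and define T = (1/2)∫₀^ζ f(y) dy and e(t) = (1/2) f( inf{ z ≥ 0 : (1/2)∫₀^z f(y) dy > t } ) for t ∈ [0,T), with e(T) = 0. Then e is continuous on [0,T], e(0) = 0, e(T) = 0 and e > 0 on (0,T). -/
open intervalIntegral Set

/-- Time change of a spindle excursion `f` into a Bessel-type excursion `e`:
if `f : [0,ζ] → [0,∞)` is continuous, vanishes at the endpoints and is positive inside,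
`T = (1/2)∫₀^ζ f` and `e(t) = (1/2) f(inf{z ≥ 0 : (1/2)∫₀^z f > t})` for `t < T`, `e(T) = 0`,
then `e` is continuous on `[0,T]`, vanishes at `0` and `T`, and is positive on `(0,T)`. -/
theorem spindle_time_change_excursion
    (ζ : ℝ) (hζ : 0 < ζ) (f : ℝ → ℝ)
    (hf_cont : ContinuousOn f (Icc 0 ζ))
    (hf0 : f 0 = 0) (hfζ : f ζ = 0)
    (hf_pos : ∀ z ∈ Ioo 0 ζ, 0 < f z)
    (T : ℝ) (hT : T = (1/2) * ∫ y in (0:ℝ)..ζ, f y)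
    (e : ℝ → ℝ)
    (he : ∀ t, e t = if t < T then
        (1/2) * f (sInf {z : ℝ | 0 ≤ z ∧ t < (1/2) * ∫ y in (0:ℝ)..z, f y})
      else 0) :
    ContinuousOn e (Icc 0 T) ∧ e 0 = 0 ∧ e T = 0 ∧ ∀ t ∈ Ioo 0 T, 0 < e t := by
  set F : ℝ → ℝ := fun z => (1/2) * ∫ y in (0:ℝ)..z, f y with hF
  have h0ζ : (0:ℝ) ∈ Icc (0:ℝ) ζ := left_mem_Icc.2 hζ.le
  have hζζ : ζ ∈ Icc (0:ℝ) ζ := right_mem_Icc.2 hζ.le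
  -- integrability on subintervals
  have hInt : ∀ a b : ℝ, a ∈ Icc 0 ζ → b ∈ Icc 0 ζ → IntervalIntegrable f MeasureTheory.volume a b :=
    fun a b ha hb => (hf_cont.mono (uIcc_subset_Icc ha hb)).intervalIntegrable
  -- continuity of F
  have hFc : ContinuousOn F (Icc 0 ζ) := by
    apply continuousOn_const.mul
    have := intervalIntegral.continuousOn_primitive_interval'
      (μ := MeasureTheory.volume) (b₁ := (0:ℝ)) (b₂ := ζ) (a := (0:ℝ))
      (hInt 0 ζ h0ζ hζζ) (by rw [uIcc_of_le hζ.le]; exact h0ζ)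
    rwa [uIcc_of_le hζ.le] at this
  -- strict monotonicity of F
  have hFmono : StrictMonoOn F (Icc 0 ζ) := by
    intro a ha b hb hab
    have h1 : (∫ y in (0:ℝ)..a, f y) + ∫ y in a..b, f y = ∫ y in (0:ℝ)..b, f y :=
      intervalIntegral.integral_add_adjacent_intervals (hInt 0 a h0ζ ha) (hInt a b ha hb)
    have hpos : 0 < ∫ y in a..b, f y := by
      refine intervalIntegral.intervalIntegral_pos_of_pos_on (hInt a b ha hb) ?_ hab
      intro x hx
      exact hf_pos x ⟨lt_of_le_of_lt ha.1 hx.1, lt_of_lt_of_le hx.2 hb.2⟩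
    simp only [hF]
    linarith
  have hF0 : F 0 = 0 := by simp [hF]
  have hFζ : F ζ = T := hT.symm
  have hTpos : 0 < T := by
    rw [← hF0, ← hFζ]
    exact hFmono h0ζ hζζ hζ
  -- the restricted map as a continuous bijection between compacts
  have hmaps : ∀ x ∈ Icc (0:ℝ) ζ, F x ∈ Icc 0 T := by
    intro x hx
    exact ⟨hF0 ▸ hFmono.monotoneOn h0ζ hx hx.1, hFζ ▸ hFmono.monotoneOn hx hζζ hx.2⟩
  have hsurj : ∀ t ∈ Icc (0:ℝ) T, ∃ x ∈ Icc (0:ℝ) ζ, F x = t := by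
    intro t ht
    have := intermediate_value_Icc hζ.le hFc
    rw [hF0, hFζ] at this
    exact this ht
  set G : Icc (0:ℝ) ζ → Icc (0:ℝ) T := fun x => ⟨F x, hmaps x x.2⟩ with hG
  have hGc : Continuous G :=
    Continuous.subtype_mk (hFc.comp_continuous continuous_subtype_val (fun x => x.2)) _
  have hGbij : Function.Bijective G := by
    constructor
    · intro a b hab
      exact Subtype.ext (hFmono.injOn a.2 b.2 (congrArg Subtype.val hab))
    · rintro ⟨t, ht⟩
      obtain ⟨x, hx, hfx⟩ := hsurj t ht
      exact ⟨⟨x, hx⟩, Subtype.ext hfx⟩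
  have hGeqc : Continuous (Equiv.ofBijective G hGbij) := hGc
  set H := hGeqc.homeoOfEquivCompactToT2 with hH
  set ψ : Icc (0:ℝ) T → Icc (0:ℝ) ζ := fun t => H.symm t with hψ
  have hψc : Continuous ψ := H.symm.continuous
  have hψ_inv : ∀ x : Icc (0:ℝ) ζ, ψ (G x) = x := fun x => H.symm_apply_apply x
  have hFψ : ∀ t : Icc (0:ℝ) T, F (ψ t) = t :=
    fun t => congrArg Subtype.val (H.apply_symm_apply t)
  -- key identity: e t = (1/2) * f (ψ t) on Icc 0 T
  have key : ∀ t : Icc (0:ℝ) T, e t = (1/2) * f (ψ t) := by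
    intro t
    rcases eq_or_lt_of_le t.2.2 with hTt | htT
    · -- t = T
      have hψT : (ψ t : ℝ) = ζ := by
        have ht : t = G ⟨ζ, hζζ⟩ := Subtype.ext (by simpa [hG, hFζ] using hTt)
        rw [ht, hψ_inv]
      rw [he t, if_neg (by rw [hTt]; exact lt_irrefl T), hψT, hfζ]
      ring
    · -- t < T
      set x : ℝ := (ψ t : ℝ) with hx
      have hxmem : x ∈ Icc (0:ℝ) ζ := (ψ t).2
      have hFx : F x = t := hFψ t
      have hxζ : x < ζ := by
        rcases lt_or_eq_of_le hxmem.2 with h | h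
        · exact h
        · exfalso
          rw [h, hFζ] at hFx
          exact (ne_of_lt htT) hFx.symm
      have hsInf : sInf {z : ℝ | 0 ≤ z ∧ (t:ℝ) < F z} = x := by
        apply csInf_eq_of_forall_ge_of_forall_gt_exists_lt
        · exact ⟨ζ, hζ.le, by rw [hFζ]; exact htT⟩
        · intro z hz
          by_contra h
          push_neg at h
          have hzI : z ∈ Icc (0:ℝ) ζ := ⟨hz.1, le_of_lt (lt_of_lt_of_le h hxmem.2)⟩
          have : F z < F x := hFmono hzI hxmem h
          rw [hFx] at this
          exact absurd hz.2 (not_lt.2 this.le)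
        · intro w hw
          have hxw : x < (x + w) / 2 := by linarith
          have hwz : (x + w) / 2 < w := by linarith
          set z : ℝ := min ((x + w) / 2) ζ with hz
          have hz0 : 0 ≤ z := le_min (by linarith [hxmem.1]) hζ.le
          have hzx : x < z := lt_min hxw hxζ
          have hzI : z ∈ Icc (0:ℝ) ζ := ⟨hz0, min_le_right _ _⟩
          have hzw : z < w := lt_of_le_of_lt (min_le_left _ _) hwz
          have : (t:ℝ) < F z := by
            rw [← hFx]; exact hFmono hxmem hzI hzx
          exact ⟨z, ⟨hz0, this⟩, hzw⟩
      rw [he t, if_pos htT,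
        show {z : ℝ | 0 ≤ z ∧ (t:ℝ) < (1/2) * ∫ y in (0:ℝ)..z, f y}
          = {z : ℝ | 0 ≤ z ∧ (t:ℝ) < F z} from rfl, hsInf]
  -- conclusions
  have hψ0 : (ψ ⟨0, le_refl 0, hTpos.le⟩ : ℝ) = 0 := by
    have h0 : (⟨0, le_refl 0, hTpos.le⟩ : Icc (0:ℝ) T) = G ⟨0, h0ζ⟩ :=
      Subtype.ext (by simp [hG, hF0])
    rw [h0, hψ_inv]
  refine ⟨?_, ?_, ?_, ?_⟩
  · rw [continuousOn_iff_continuous_restrict]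
    have : (Icc (0:ℝ) T).domRestrict e = fun t => (1/2) * f (ψ t) := funext key
    rw [this]
    exact continuous_const.mul
      (hf_cont.comp_continuous (continuous_subtype_val.comp hψc) (fun t => (ψ t).2))
  · have := key ⟨0, le_refl 0, hTpos.le⟩
    rw [hψ0] at this
    simpa [hf0] using this
  · rw [he T, if_neg (lt_irrefl T)]
  · intro t ht
    have hkt := key ⟨t, ht.1.le, ht.2.le⟩
    set x : ℝ := (ψ ⟨t, ht.1.le, ht.2.le⟩ : ℝ) with hx
    have hxmem : x ∈ Icc (0:ℝ) ζ := (ψ _).2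
    have hFx : F x = t := hFψ _
    have hx0 : 0 < x := by
      rw [← hFmono.lt_iff_lt h0ζ hxmem, hF0, hFx]; exact ht.1
    have hxζ : x < ζ := by
      rw [← hFmono.lt_iff_lt hxmem hζζ, hFζ, hFx]; exact ht.2
    rw [hkt]
    have := hf_pos x ⟨hx0, hxζ⟩
    linarith
end

section
/- With f and e as above, the time changes are mutually inverse: for t ∈ (0,T) and z ∈ (0,ζ), one has z = ∫₀^t du/e(u) if and only if t = (1/2)∫₀^z f(y) dy; moreover f(∫₀^t du/e(u)) = 2 e(t) for all t ∈ [0,T]. -/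
open intervalIntegral Set Filter Topology

/-- Half-primitive of the spindle. -/
noncomputable def spindleF (f : ℝ → ℝ) (z : ℝ) : ℝ := (1/2) * ∫ y in (0:ℝ)..z, f y

/-- Generalized inverse of the half-primitive. -/
noncomputable def spindleG (f : ℝ → ℝ) (t : ℝ) : ℝ :=
  sInf {z : ℝ | 0 ≤ z ∧ t < spindleF f z}

/-- The time changes relating a spindle `f` and its Bessel-type excursion `e` are mutually
inverse: for `t ∈ (0,T)` and `z ∈ (0,ζ)`, `z = ∫₀^t du/e(u)` iff `t = (1/2)∫₀^z f(y)dy`;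
moreover `f(∫₀^t du/e(u)) = 2 e(t)` for all `t ∈ [0,T]`. -/
theorem spindle_time_change_inverse
    (ζ : ℝ) (hζ : 0 < ζ) (f : ℝ → ℝ)
    (hf_cont : ContinuousOn f (Icc 0 ζ))
    (hf0 : f 0 = 0) (hfζ : f ζ = 0)
    (hf_pos : ∀ z ∈ Ioo 0 ζ, 0 < f z)
    (T : ℝ) (hT : T = (1/2) * ∫ y in (0:ℝ)..ζ, f y)
    (e : ℝ → ℝ)
    (he : ∀ t, e t = if t < T then
        (1/2) * f (sInf {z : ℝ | 0 ≤ z ∧ t < (1/2) * ∫ y in (0:ℝ)..z, f y})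
      else 0)
    (hint : ∀ t, 0 ≤ t → t < T → IntervalIntegrable (fun u => 1 / e u) MeasureTheory.volume 0 t) :
    (∀ t ∈ Ioo 0 T, ∀ z ∈ Ioo 0 ζ,
      (z = ∫ u in (0:ℝ)..t, 1 / e u) ↔ (t = (1/2) * ∫ y in (0:ℝ)..z, f y)) ∧
    (∀ t ∈ Icc 0 T, f (∫ u in (0:ℝ)..t, 1 / e u) = 2 * e t) := by
  set F : ℝ → ℝ := spindleF f with hFdef
  set g : ℝ → ℝ := spindleG f with hgdef
  have hFap : ∀ z, F z = (1/2) * ∫ y in (0:ℝ)..z, f y := fun z => rfl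
  have hgap : ∀ t, g t = sInf {z : ℝ | 0 ≤ z ∧ t < F z} := fun t => rfl
  have he' : ∀ t, e t = if t < T then (1/2) * f (g t) else 0 := he
  have hTF : T = F ζ := hT
  -- integrability of f on subintervals of [0, ζ]
  have hfi : ∀ a ∈ Icc (0:ℝ) ζ, ∀ b ∈ Icc (0:ℝ) ζ,
      IntervalIntegrable f MeasureTheory.volume a b := by
    intro a ha b hb
    exact (hf_cont.mono (uIcc_subset_Icc ha hb)).intervalIntegrable
  have hF0 : F 0 = 0 := by simp [hFap]
  -- F is strictly monotone on [0, ζ]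
  have hFmono : StrictMonoOn F (Icc 0 ζ) := by
    intro a ha b hb hab
    have hpos : 0 < ∫ y in a..b, f y := by
      apply intervalIntegral_pos_of_pos_on (hfi a ha b hb) _ hab
      intro x hx
      exact hf_pos x ⟨lt_of_le_of_lt ha.1 hx.1, lt_of_lt_of_le hx.2 hb.2⟩
    have hsub : (∫ y in (0:ℝ)..b, f y) - ∫ y in (0:ℝ)..a, f y = ∫ y in a..b, f y :=
      integral_interval_sub_left (hfi 0 (left_mem_Icc.2 hζ.le) b hb)
        (hfi 0 (left_mem_Icc.2 hζ.le) a ha)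
    rw [hFap, hFap]
    linarith
  have hT0 : 0 < T := by
    rw [hTF, ← hF0]
    exact hFmono (left_mem_Icc.2 hζ.le) (right_mem_Icc.2 hζ.le) hζ
  -- F continuous on [0, ζ]
  have hFcont : ContinuousOn F (Icc 0 ζ) := by
    have h1 : ContinuousOn (fun x => ∫ y in (0:ℝ)..x, f y) (Icc 0 ζ) := by
      have h2 := continuousOn_primitive_interval'
        (hfi 0 (left_mem_Icc.2 hζ.le) ζ (right_mem_Icc.2 hζ.le)) left_mem_uIcc
      rwa [uIcc_of_le hζ.le] at h2
    exact continuousOn_const.mul h1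
  -- the key property of g: it inverts F on [0, T)
  have hgF : ∀ t ∈ Ico 0 T, g t ∈ Ico 0 ζ ∧ F (g t) = t := by
    intro t ht
    obtain ⟨w, hw, hFw⟩ : ∃ w ∈ Icc 0 ζ, F w = t := by
      have hIVT := intermediate_value_Icc hζ.le hFcont
      have htmem : t ∈ Icc (F 0) (F ζ) := by
        rw [hF0, ← hTF]; exact ⟨ht.1, ht.2.le⟩
      exact hIVT htmem
    have hwζ : w < ζ := by
      rcases lt_or_eq_of_le hw.2 with h | h
      · exact h
      · exfalso
        rw [h, ← hTF] at hFw
        exact ht.2.ne' hFw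
    have hsub : Ioc w ζ ⊆ {z : ℝ | 0 ≤ z ∧ t < F z} := by
      intro z hz
      refine ⟨le_trans hw.1 hz.1.le, ?_⟩
      rw [← hFw]
      exact hFmono hw ⟨le_trans hw.1 hz.1.le, hz.2⟩ hz.1
    have hlb : ∀ z ∈ {z : ℝ | 0 ≤ z ∧ t < F z}, w ≤ z := by
      intro z hz
      by_contra hzw
      push_neg at hzw
      have hzI : z ∈ Icc (0:ℝ) ζ := ⟨hz.1, le_trans hzw.le hw.2⟩
      have hlt : F z < F w := hFmono hzI hw hzw
      rw [hFw] at hlt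
      exact absurd hz.2 (not_lt.2 hlt.le)
    have hgw : g t = w := by
      rw [hgap]
      refine le_antisymm ?_ (le_csInf ⟨ζ, hsub ⟨hwζ, le_refl ζ⟩⟩ hlb)
      calc sInf {z : ℝ | 0 ≤ z ∧ t < F z} ≤ sInf (Ioc w ζ) :=
            csInf_le_csInf ⟨0, fun z hz => hz.1⟩ ⟨ζ, hwζ, le_refl ζ⟩ hsub
        _ = w := csInf_Ioc hwζ
    rw [hgw]
    exact ⟨⟨hw.1, hwζ⟩, hFw⟩
  have hg0 : g 0 = 0 := by
    have h := hgF 0 ⟨le_refl 0, hT0⟩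
    exact hFmono.injOn (Ico_subset_Icc_self h.1) (left_mem_Icc.2 hζ.le) (by rw [h.2, hF0])
  have hgFz : ∀ z ∈ Ico 0 ζ, g (F z) = z := by
    intro z hz
    have hFz : F z ∈ Ico 0 T := by
      constructor
      · rw [← hF0]
        rcases eq_or_lt_of_le hz.1 with h | h
        · rw [← h]
        · exact (hFmono (left_mem_Icc.2 hζ.le) (Ico_subset_Icc_self hz) h).le
      · rw [hTF]
        exact hFmono (Ico_subset_Icc_self hz) (right_mem_Icc.2 hζ.le) hz.2
    have h := hgF (F z) hFz
    exact hFmono.injOn (Ico_subset_Icc_self h.1) (Ico_subset_Icc_self hz) h.2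
  have he2 : ∀ t ∈ Ico 0 T, e t = (1/2) * f (g t) := by
    intro t ht; rw [he' t, if_pos ht.2]
  -- g maps (0, T) into (0, ζ)
  have hgIoo : ∀ t ∈ Ioo 0 T, g t ∈ Ioo 0 ζ := by
    intro t ht
    have h := hgF t ⟨ht.1.le, ht.2⟩
    rcases eq_or_lt_of_le h.1.1 with hh | hh
    · exfalso
      have h2 := h.2
      rw [← hh, hF0] at h2
      exact ht.1.ne h2
    · exact ⟨hh, h.1.2⟩
  -- monotonicity of g
  have hgmono : MonotoneOn g (Ico 0 T) := by
    intro s hs t ht hst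
    by_contra h
    push_neg at h
    have hlt : F (g t) < F (g s) :=
      hFmono (Ico_subset_Icc_self (hgF t ht).1) (Ico_subset_Icc_self (hgF s hs).1) h
    rw [(hgF s hs).2, (hgF t ht).2] at hlt
    exact absurd hst (not_le.2 hlt)
  have hgstrict : StrictMonoOn g (Ico 0 T) := by
    intro s hs t ht hst
    rcases lt_or_eq_of_le (hgmono hs ht hst.le) with h | h
    · exact h
    · exfalso
      have h1 := (hgF s hs).2
      have h2 := (hgF t ht).2
      rw [← h1, ← h2, h] at hst
      exact lt_irrefl _ hst
  -- continuity of g at interior points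
  have hgcontAt : ∀ t ∈ Ioo 0 T, ContinuousAt g t := by
    intro t ht
    apply continuousAt_of_monotoneOn_of_image_mem_nhds
      (hgmono.mono Ioo_subset_Ico_self) (Ioo_mem_nhds ht.1 ht.2)
    have himg : g '' Ioo 0 T = Ioo 0 ζ := by
      apply Subset.antisymm
      · rintro _ ⟨s, hs, rfl⟩
        exact hgIoo s hs
      · intro z hz
        refine ⟨F z, ⟨?_, ?_⟩, hgFz z (Ioo_subset_Ico_self hz)⟩
        · rw [← hF0]
          exact hFmono (left_mem_Icc.2 hζ.le) ⟨hz.1.le, hz.2.le⟩ hz.1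
        · rw [hTF]
          exact hFmono ⟨hz.1.le, hz.2.le⟩ (right_mem_Icc.2 hζ.le) hz.2
    rw [himg]
    exact isOpen_Ioo.mem_nhds (hgIoo t ht)
  -- continuity of g at 0 from the right
  have hgcont0 : ContinuousWithinAt g (Ici 0) 0 := by
    apply StrictMonoOn.continuousWithinAt_right_of_exists_between hgstrict
      (Ico_mem_nhdsGE_of_mem (left_mem_Ico.2 hT0))
    intro b hb
    rw [hg0] at hb
    set z := min b ζ / 2 with hz
    have hz0 : 0 < z := by positivity
    have hzζ : z < ζ := by
      have h1 : min b ζ ≤ ζ := min_le_right _ _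
      rw [hz]; linarith
    have hzb : z ≤ b := by
      have h1 : min b ζ ≤ b := min_le_left _ _
      rw [hz]; linarith
    refine ⟨F z, ⟨?_, ?_⟩, ?_⟩
    · rw [← hF0]
      exact (hFmono (left_mem_Icc.2 hζ.le) ⟨hz0.le, hzζ.le⟩ hz0).le
    · rw [hTF]
      exact hFmono ⟨hz0.le, hzζ.le⟩ (right_mem_Icc.2 hζ.le) hzζ
    · rw [hgFz z ⟨hz0.le, hzζ⟩, hg0]
      exact ⟨hz0, hzb⟩
  have hgcontOn : ∀ b ∈ Ico (0:ℝ) T, ContinuousOn g (Icc 0 b) := by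
    intro b hb x hx
    rcases eq_or_lt_of_le hx.1 with h | h
    · rw [← h]
      exact hgcont0.mono Icc_subset_Ici_self
    · exact (hgcontAt x ⟨h, lt_of_le_of_lt hx.2 hb.2⟩).continuousWithinAt
  -- the derivative of g
  have hderiv : ∀ t ∈ Ioo 0 T, HasDerivAt g (1 / e t) t := by
    intro t ht
    have hx := hgIoo t ht
    have hxI : g t ∈ Icc 0 ζ := Ioo_subset_Icc_self hx
    have hcx : ContinuousAt f (g t) :=
      hf_cont.continuousAt (Icc_mem_nhds hx.1 hx.2)
    have hFder : HasDerivAt F ((1/2) * f (g t)) (g t) := by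
      have h1 : HasDerivAt (fun u => ∫ y in (0:ℝ)..u, f y) (f (g t)) (g t) :=
        integral_hasDerivAt_right (hfi 0 (left_mem_Icc.2 hζ.le) _ hxI)
          ⟨Icc 0 ζ, Icc_mem_nhds hx.1 hx.2, hf_cont.aestronglyMeasurable measurableSet_Icc⟩ hcx
      exact HasDerivAt.const_mul (1/2 : ℝ) h1
    have hne : (1/2) * f (g t) ≠ 0 := by
      have := hf_pos _ hx
      positivity
    have hfg : ∀ᶠ y in 𝓝 t, F (g y) = y := by
      filter_upwards [Ioo_mem_nhds ht.1 ht.2] with y hy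
      exact (hgF y ⟨hy.1.le, hy.2⟩).2
    have hd := HasDerivAt.of_local_left_inverse (hgcontAt t ht) hFder hne hfg
    have heq : ((1/2) * f (g t))⁻¹ = 1 / e t := by
      rw [he2 t ⟨ht.1.le, ht.2⟩]
      exact (one_div _).symm
    rwa [heq] at hd
  -- the primitive of 1/e equals g on [0, T)
  have hInt : ∀ t ∈ Ico (0:ℝ) T, (∫ u in (0:ℝ)..t, 1 / e u) = g t := by
    intro t ht
    rcases eq_or_lt_of_le ht.1 with h | h
    · rw [← h, intervalIntegral.integral_same]
      exact hg0.symm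
    · have hFTC := integral_eq_sub_of_hasDerivAt_of_le h.le (hgcontOn t ht)
        (fun x hx => hderiv x ⟨hx.1, hx.2.trans ht.2⟩)
        (hint t ht.1 ht.2)
      rw [hFTC, hg0, sub_zero]
  constructor
  · -- the mutual-inverse statement
    intro t ht z hz
    rw [hInt t ⟨ht.1.le, ht.2⟩, ← hFap z]
    constructor
    · rintro rfl
      exact ((hgF t ⟨ht.1.le, ht.2⟩).2).symm
    · rintro rfl
      exact (hgFz z (Ioo_subset_Ico_self hz)).symm
  · -- f ∘ (time change) = 2 e
    intro t ht
    rcases eq_or_lt_of_le ht.2 with hTt | hTt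
    · -- t = T
      rw [hTt]
      have heT : e T = 0 := by rw [he' T, if_neg (lt_irrefl T)]
      rw [heT, mul_zero]
      by_cases hii : IntervalIntegrable (fun u => 1 / e u) MeasureTheory.volume 0 T
      · have hIζ : (∫ u in (0:ℝ)..T, 1 / e u) = ζ := by
          have hP : ContinuousOn (fun x => ∫ u in (0:ℝ)..x, 1 / e u) (Icc 0 T) := by
            have h2 := continuousOn_primitive_interval' hii left_mem_uIcc
            rwa [uIcc_of_le hT0.le] at h2
          have hle : 𝓝[<] T ≤ 𝓝[Icc 0 T] T := by
            rw [← nhdsWithin_Ioo_eq_nhdsLT hT0]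
            exact nhdsWithin_mono _ Ioo_subset_Icc_self
          have h1 : Tendsto (fun x => ∫ u in (0:ℝ)..x, 1 / e u) (𝓝[<] T)
              (𝓝 (∫ u in (0:ℝ)..T, 1 / e u)) :=
            (hP T (right_mem_Icc.2 hT0.le)).mono_left hle
          have hgT : Tendsto g (𝓝[<] T) (𝓝 ζ) := by
            refine tendsto_order.2 ⟨fun b hb => ?_, fun b hb => ?_⟩
            · -- eventually b < g x, for b < ζ
              set w := (max b 0 + ζ) / 2 with hw
              have hmζ : max b 0 < ζ := max_lt hb hζ
              have hw0 : 0 < w := by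
                have h3 : (0:ℝ) ≤ max b 0 := le_max_right _ _
                rw [hw]; linarith
              have hwζ : w < ζ := by rw [hw]; linarith
              have hbw : b < w := by
                have h3 : b ≤ max b 0 := le_max_left _ _
                rw [hw]; linarith
              have hFwT : F w < T := by
                rw [hTF]
                exact hFmono ⟨hw0.le, hwζ.le⟩ (right_mem_Icc.2 hζ.le) hwζ
              filter_upwards [Ioo_mem_nhdsLT_of_mem
                (show T ∈ Ioc (F w) T from ⟨hFwT, le_refl T⟩)] with x hx
              have hFw0 : 0 < F w := by
                rw [← hF0]
                exact hFmono (left_mem_Icc.2 hζ.le) ⟨hw0.le, hwζ.le⟩ hw0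
              have hxm : x ∈ Ico (0:ℝ) T := ⟨(hFw0.trans hx.1).le, hx.2⟩
              have hwgx : w < g x := by
                by_contra hcon
                push_neg at hcon
                have h4 : F (g x) ≤ F w :=
                  hFmono.monotoneOn (Ico_subset_Icc_self (hgF x hxm).1)
                    ⟨hw0.le, hwζ.le⟩ hcon
                rw [(hgF x hxm).2] at h4
                exact absurd hx.1 (not_lt.2 h4)
              exact hbw.trans hwgx
            · -- eventually g x < b, for ζ < b
              filter_upwards [Ioo_mem_nhdsLT_of_mem
                (show T ∈ Ioc (0:ℝ) T from ⟨hT0, le_refl T⟩)] with x hx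
              exact lt_trans (hgIoo x hx).2 hb
          have heq2 : g =ᶠ[𝓝[<] T] (fun x => ∫ u in (0:ℝ)..x, 1 / e u) := by
            filter_upwards [Ioo_mem_nhdsLT_of_mem
              (show T ∈ Ioc (0:ℝ) T from ⟨hT0, le_refl T⟩)] with x hx
            exact (hInt x ⟨hx.1.le, hx.2⟩).symm
          have h2 : Tendsto (fun x => ∫ u in (0:ℝ)..x, 1 / e u) (𝓝[<] T) (𝓝 ζ) :=
            Filter.Tendsto.congr' heq2 hgT
          exact tendsto_nhds_unique h1 h2
        rw [hIζ, hfζ]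
      · rw [intervalIntegral.integral_undef hii, hf0]
    · -- t < T
      rw [hInt t ⟨ht.1, hTt⟩, he2 t ⟨ht.1, hTt⟩]
      ring
end

section
/- Let λ : [0,T] → [0,∞) be nondecreasing and right-continuous with λ(0-) := λ(0). Then the set β := { (λ(t-), λ(t)) : t ∈ [0,T], λ(t-) < λ(t) } is an interval partition of [0, λ(T)] if and only if the (pushforward) Stieltjes measure of λ has no absolutely continuous or singular continuous part other than on a λ-null complement, i.e., λ(T) - λ(0) equals the sum of all jumps λ(t) - λ(t-); in that case the total mass ‖β‖ equals λ(T) when λ(0) = 0 and λ is purely discontinuous. -/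
open MeasureTheory Set Function

/-- `β` is an interval partition of `[0,M]`: a set of pairwise disjoint open subintervals of
`[0,M]` covering `[0,M]` up to a Lebesgue-null set. -/
def IsIntervalPartitionOf (β : Set (Set ℝ)) (M : ℝ) : Prop :=
  (∀ B ∈ β, ∃ a b : ℝ, 0 ≤ a ∧ a < b ∧ b ≤ M ∧ B = Set.Ioo a b) ∧
  β.Pairwise Disjoint ∧
  volume (Set.Icc 0 M \ ⋃₀ β) = 0

/-- Let `λ : [0,T] → [0,∞)` be nondecreasing and right-continuous with `λ(0) = 0` and
`λ(0-) := λ(0)`. The collection `β = {(λ(t-), λ(t)) : t ∈ [0,T], λ(t-) < λ(t)}` is an interval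
partition of `[0, λ(T)]` if and only if `λ(T) - λ(0)` equals the sum of all jumps
`λ(t) - λ(t-)`, i.e. `λ` is purely discontinuous; in that case (as `λ(0) = 0`) the total
mass of `β` is `λ(T)`. -/
theorem skewer_intervalPartition_iff_purely_discontinuous
    (T : ℝ) (hT : 0 ≤ T) (l : ℝ → ℝ)
    (hmono : MonotoneOn l (Icc 0 T))
    (hrc : ∀ t ∈ Ico 0 T, ContinuousWithinAt l (Ici t) t)
    (hl0 : l 0 = 0)
    (L : ℝ → ℝ) (hL : ∀ t, L t = if t = 0 then l 0 else leftLim l t)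
    (β : Set (Set ℝ))
    (hβ : β = {S : Set ℝ | ∃ t ∈ Icc 0 T, L t < l t ∧ S = Set.Ioo (L t) (l t)}) :
    IsIntervalPartitionOf β (l T) ↔
      l T - l 0 = ∑' t : {t : ℝ | t ∈ Icc 0 T ∧ L t < l t}, (l t - L t) := by
  classical
  set J : Set ℝ := {t : ℝ | t ∈ Icc 0 T ∧ L t < l t} with hJdef
  -- the monotone extension of `l` to all of `ℝ`
  set g : ℝ → ℝ := fun x => l (max 0 (min x T)) with hg
  have hproj : ∀ x : ℝ, max 0 (min x T) ∈ Icc 0 T := fun x =>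
    ⟨le_max_left _ _, max_le hT (min_le_right _ _)⟩
  have hgmono : Monotone g := by
    intro x y hxy
    exact hmono (hproj x) (hproj y)
      (max_le_max le_rfl (min_le_min_right _ hxy))
  have hgeq : ∀ x ∈ Icc 0 T, g x = l x := by
    intro x hx
    simp only [hg, min_eq_left hx.2, max_eq_right hx.1]
  -- identification of `L` with the left limit of `g`
  have hLg : ∀ t ∈ Ioc 0 T, L t = leftLim g t := by
    intro t ht
    rw [hL t, if_neg (ne_of_gt ht.1)]
    have hev : g =ᶠ[nhdsWithin t (Iio t)] l := by
      filter_upwards [Ioo_mem_nhdsLT ht.1] with x hx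
      exact hgeq x ⟨hx.1.le, hx.2.le.trans ht.2⟩
    have htd : Filter.Tendsto l (nhdsWithin t (Iio t)) (nhds (leftLim g t)) :=
      (hgmono.tendsto_leftLim t).congr' hev
    exact (leftLim_eq_of_tendsto htd)
  -- basic facts about jump times
  have hJpos : ∀ t ∈ J, 0 < t := by
    intro t ht
    rcases lt_or_eq_of_le ht.1.1 with h | h
    · exact h
    · exfalso
      have h2 := ht.2
      rw [← h, hL, if_pos rfl] at h2
      exact lt_irrefl _ h2
  have hL0 : ∀ t ∈ J, 0 ≤ L t := by
    intro t ht
    rw [hLg t ⟨hJpos t ht, ht.1.2⟩]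
    have := hgmono.le_leftLim (hJpos t ht)
    rw [hgeq 0 ⟨le_rfl, hT⟩, hl0] at this
    exact this
  have hlT : ∀ t ∈ J, l t ≤ l T :=
    fun t ht => hmono ht.1 ⟨hT, le_rfl⟩ ht.1.2
  have hsep : ∀ s ∈ J, ∀ t ∈ J, s < t → l s ≤ L t := by
    intro s hs t ht hst
    rw [hLg t ⟨hJpos t ht, ht.1.2⟩, ← hgeq s hs.1]
    exact hgmono.le_leftLim hst
  -- `β` as an image
  have hβim : β = (fun t => Set.Ioo (L t) (l t)) '' J := by
    rw [hβ]
    ext S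
    constructor
    · rintro ⟨t, ht, hlt, rfl⟩; exact ⟨t, ⟨ht, hlt⟩, rfl⟩
    · rintro ⟨t, ⟨ht, hlt⟩, rfl⟩; exact ⟨t, ht, hlt, rfl⟩
  -- pairwise disjointness of the jump intervals
  have hpd : J.PairwiseDisjoint fun t => Set.Ioo (L t) (l t) := by
    intro s hs t ht hst
    rcases lt_or_gt_of_ne hst with h | h
    · refine Set.disjoint_left.2 fun x hx hx' => ?_
      exact absurd (hx.2.le.trans (hsep s hs t ht h)) (not_le.2 hx'.1)
    · refine Set.disjoint_left.2 fun x hx hx' => ?_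
      exact absurd (hx'.2.le.trans (hsep t ht s hs h)) (not_le.2 hx.1)
  -- countability of the jump set
  have hJc : J.Countable := by
    refine hgmono.countable_not_continuousAt.mono fun t ht => ?_
    intro hcont
    have htd : Filter.Tendsto g (nhdsWithin t (Iio t)) (nhds (g t)) :=
      hcont.continuousWithinAt
    have := leftLim_eq_of_tendsto (f := g) (a := t)
      htd
    rw [← hLg t ⟨hJpos t ht, ht.1.2⟩, hgeq t ht.1] at this
    exact absurd this (ne_of_lt ht.2)
  -- the union of the jump intervals and its volume
  set U : Set ℝ := ⋃ t ∈ J, Set.Ioo (L t) (l t) with hU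
  have hsU : ⋃₀ β = U := by rw [hβim, Set.sUnion_image]
  have hUvol : volume U = ∑' t : J, ENNReal.ofReal (l t - L t) := by
    rw [hU, measure_biUnion hJc hpd (fun t _ => measurableSet_Ioo)]
    simp [Real.volume_Ioo]
  have hUsub : U ⊆ Icc 0 (l T) := by
    rw [hU]
    refine Set.iUnion₂_subset fun t ht => ?_
    exact Set.Ioo_subset_Icc_self.trans (Set.Icc_subset_Icc (hL0 t ht) (hlT t ht))
  have hUmeas : MeasurableSet U :=
    MeasurableSet.biUnion hJc fun t _ => measurableSet_Ioo
  have hlT0 : 0 ≤ l T := by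
    rw [← hl0]; exact hmono ⟨le_rfl, hT⟩ ⟨hT, le_rfl⟩ hT
  have hUle : volume U ≤ ENNReal.ofReal (l T) := by
    have := measure_mono (μ := volume) hUsub
    rwa [Real.volume_Icc, sub_zero] at this
  have hUfin : volume U ≠ ⊤ := ne_top_of_le_ne_top ENNReal.ofReal_ne_top hUle
  -- the real jump sum equals the toReal of the volume of U
  have htsum : (∑' t : J, (l t - L t)) = (volume U).toReal := by
    rw [hUvol, ENNReal.tsum_toReal_eq (fun _ => ENNReal.ofReal_ne_top)]
    refine tsum_congr fun t => ?_
    rw [ENNReal.toReal_ofReal (sub_nonneg.2 t.2.2.le)]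
  -- the key measure equivalence
  have hkey : volume (Icc 0 (l T) \ U) = 0 ↔ l T = (volume U).toReal := by
    rw [measure_diff hUsub hUmeas.nullMeasurableSet hUfin, Real.volume_Icc, sub_zero,
      tsub_eq_zero_iff_le]
    constructor
    · intro h
      rw [← ENNReal.toReal_ofReal hlT0]
      exact congrArg ENNReal.toReal (le_antisymm h hUle)
    · intro h
      rw [← ENNReal.ofReal_toReal hUfin, ← h]
  constructor
  · rintro ⟨-, -, h3⟩
    rw [hsU] at h3
    rw [hl0, sub_zero, htsum]
    exact hkey.1 h3
  · intro h
    rw [hl0, sub_zero, htsum] at h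
    refine ⟨?_, ?_, ?_⟩
    · rw [hβim]
      rintro B ⟨t, ht, rfl⟩
      exact ⟨L t, l t, hL0 t ht, ht.2, hlT t ht, rfl⟩
    · rw [hβim]
      rintro B ⟨s, hs, rfl⟩ B' ⟨t, ht, rfl⟩ hne
      have hst : s ≠ t := fun h => hne (by rw [h])
      exact hpd hs ht hst
    · rw [hsU]
      exact hkey.2 h
end
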